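/- arXiv:1506.04313 — 2 statements merged into one kernel-verified Lean document; each statement's English description precedes it below -/
import Mathlib

section
/- If X = (X1, X2) is uniformly distributed on the closed unit disk in R^2 and φ(θ) = E[exp(i θ·X)] is its characteristic function, then |φ(θ)| ≤ (4/π)·min(1/|θ1|, 1/|θ2|) for all θ = (θ1, θ2) with θ1 ≠ 0 and θ2 ≠ 0. -/
set_option maxHeartbeats 1000000

open MeasureTheory

/-- The unit disk as a subset of `ℝ × ℝ`. -/
def diskSet : Set (ℝ × ℝ) := {p | p.1 ^ 2 + p.2 ^ 2 ≤ 1}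

lemma diskSet_measurable : MeasurableSet diskSet :=
  measurableSet_le (by fun_prop) measurable_const

lemma diskSet_compact : IsCompact diskSet := by
  have hclosed : IsClosed diskSet :=
    isClosed_le (by fun_prop) continuous_const
  have hsub : diskSet ⊆ Set.Icc ((-1, -1) : ℝ × ℝ) (1, 1) := by
    rintro ⟨x, y⟩ h
    simp only [diskSet, Set.mem_setOf_eq] at h
    have hx : x ^ 2 ≤ 1 := by nlinarith [sq_nonneg y]
    have hy : y ^ 2 ≤ 1 := by nlinarith [sq_nonneg x]
    have hx' : |x| ≤ 1 := by nlinarith [sq_abs x, abs_nonneg x]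
    have hy' : |y| ≤ 1 := by nlinarith [sq_abs y, abs_nonneg y]
    constructor <;> constructor <;> simp <;> cases abs_le.1 hx' <;> cases abs_le.1 hy' <;> linarith [abs_le.1 hx', abs_le.1 hy']
  exact isCompact_Icc.of_isClosed_subset hclosed hsub

lemma norm_integral_exp_Icc (d : ℝ) (hd : d ≠ 0) (a : ℝ) (ha : 0 ≤ a) :
    ‖∫ y in Set.Icc (-a) a, Complex.exp (Complex.I * d * y)‖ ≤ 2 / |d| := by
  have hc : (Complex.I * d) ≠ 0 := by
    simp [Complex.I_ne_zero, Complex.ofReal_eq_zero, hd]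
  rw [MeasureTheory.integral_Icc_eq_integral_Ioc,
    ← intervalIntegral.integral_of_le (by linarith : -a ≤ a)]
  have : (∫ y in (-a)..a, Complex.exp (Complex.I * d * y)) =
      (Complex.exp (Complex.I * d * a) - Complex.exp (Complex.I * d * (-a))) / (Complex.I * d) := by
    simpa using integral_exp_mul_complex (a := -a) (b := a) hc
  rw [this, norm_div]
  have h1 : ‖Complex.exp (Complex.I * d * a)‖ = 1 := by
    rw [show Complex.I * d * a = ((d * a : ℝ) : ℂ) * Complex.I by push_cast; ring]
    exact Complex.norm_exp_ofReal_mul_I _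
  have h2 : ‖Complex.exp (Complex.I * d * (-a))‖ = 1 := by
    rw [show Complex.I * d * (-a) = ((d * (-a) : ℝ) : ℂ) * Complex.I by push_cast; ring]
    exact Complex.norm_exp_ofReal_mul_I _
  have hnum : ‖Complex.exp (Complex.I * d * a) - Complex.exp (Complex.I * d * (-a))‖ ≤ 2 := by
    calc _ ≤ ‖Complex.exp (Complex.I * d * a)‖ + ‖Complex.exp (Complex.I * d * (-a))‖ :=
          norm_sub_le _ _
      _ = 2 := by rw [h1, h2]; norm_num
  have hden : ‖Complex.I * (d : ℂ)‖ = |d| := by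
    simp [Complex.norm_real]
  rw [hden]
  exact (div_le_div_iff_of_pos_right (abs_pos.2 hd)).2 hnum

lemma slice_eq (x : ℝ) (hx : x ^ 2 ≤ 1) :
    {y : ℝ | x ^ 2 + y ^ 2 ≤ 1} = Set.Icc (-Real.sqrt (1 - x ^ 2)) (Real.sqrt (1 - x ^ 2)) := by
  ext y
  simp only [Set.mem_setOf_eq, Set.mem_Icc, ← abs_le]
  rw [show (x ^ 2 + y ^ 2 ≤ 1 ↔ y ^ 2 ≤ 1 - x ^ 2) by constructor <;> intro <;> linarith,
    ← sq_abs y]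
  exact (Real.le_sqrt (abs_nonneg y) (by linarith)).symm

lemma bound_snd (c d : ℝ) (hd : d ≠ 0) :
    ‖∫ p in diskSet, Complex.exp (Complex.I * ((c * p.1 + d * p.2 : ℝ) : ℂ))‖ ≤ 4 / |d| := by
  set g : ℝ × ℝ → ℂ := fun p => Complex.exp (Complex.I * ((c * p.1 + d * p.2 : ℝ) : ℂ)) with hg
  have hgint : IntegrableOn g diskSet := by
    exact ContinuousOn.integrableOn_compact diskSet_compact (Continuous.continuousOn (by fun_prop))
  have hind : Integrable (diskSet.indicator g) := by
    rwa [integrable_indicator_iff diskSet_measurable]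
  have hind' : Integrable (diskSet.indicator g) ((volume : Measure ℝ).prod volume) := by
    rwa [← MeasureTheory.Measure.volume_eq_prod]
  rw [← MeasureTheory.integral_indicator diskSet_measurable,
    MeasureTheory.Measure.volume_eq_prod, MeasureTheory.integral_prod _ hind']
  -- inner integral as a function of x
  set F : ℝ → ℂ := fun x => ∫ y, diskSet.indicator g (x, y) with hF
  have key : ∀ x : ℝ, ‖F x‖ ≤ (Set.Icc (-1 : ℝ) 1).indicator (fun _ => 2 / |d|) x := by
    intro x
    have hFx : F x = ∫ y in {y : ℝ | x ^ 2 + y ^ 2 ≤ 1}, g (x, y) := by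
      rw [hF, ← MeasureTheory.integral_indicator
        (measurableSet_le (by fun_prop) measurable_const)]
      refine integral_congr_ae (Filter.Eventually.of_forall fun y => ?_)
      by_cases h : x ^ 2 + y ^ 2 ≤ 1
      · simp only [Set.indicator_apply, diskSet, Set.mem_setOf_eq, h, if_true]
      · simp only [Set.indicator_apply, diskSet, Set.mem_setOf_eq, h, if_false]
    by_cases hx : x ∈ Set.Icc (-1 : ℝ) 1
    · rw [Set.indicator_of_mem hx]
      have hx2 : x ^ 2 ≤ 1 := by
        rcases hx with ⟨h1, h2⟩; nlinarith
      rw [hFx, slice_eq x hx2]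
      have hsplit : ∀ y : ℝ, g (x, y) =
          Complex.exp (Complex.I * ((c * x : ℝ) : ℂ)) * Complex.exp (Complex.I * d * y) := by
        intro y
        rw [hg, ← Complex.exp_add]
        exact congrArg Complex.exp (by push_cast; ring)
      rw [MeasureTheory.setIntegral_congr_fun measurableSet_Icc (fun y _ => hsplit y),
        MeasureTheory.integral_const_mul, norm_mul]
      have h1 : ‖Complex.exp (Complex.I * ((c * x : ℝ) : ℂ))‖ = 1 := by
        rw [show Complex.I * ((c * x : ℝ) : ℂ) = ((c * x : ℝ) : ℂ) * Complex.I by ring]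
        exact Complex.norm_exp_ofReal_mul_I _
      rw [h1, one_mul]
      exact norm_integral_exp_Icc d hd _ (Real.sqrt_nonneg _)
    · rw [Set.indicator_of_notMem hx]
      have hx2 : 1 < x ^ 2 := by
        simp only [Set.mem_Icc, not_and_or, not_le] at hx
        rcases hx with h | h <;> nlinarith
      have hempty : {y : ℝ | x ^ 2 + y ^ 2 ≤ 1} = ∅ := by
        ext y; simp only [Set.mem_setOf_eq, Set.mem_empty_iff_false, iff_false, not_le]
        nlinarith [sq_nonneg y]
      rw [hFx, hempty]
      simp
  calc ‖∫ x, F x‖ ≤ ∫ x, (Set.Icc (-1 : ℝ) 1).indicator (fun _ => 2 / |d|) x := by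
        apply MeasureTheory.norm_integral_le_of_norm_le
        · rw [integrable_indicator_iff measurableSet_Icc]
          exact integrableOn_const (by simp)
        · exact Filter.Eventually.of_forall key
    _ = 4 / |d| := by
        rw [MeasureTheory.integral_indicator_const _ measurableSet_Icc]
        simp [Real.volume_Icc]
        ring

lemma bound_fst (c d : ℝ) (hc : c ≠ 0) :
    ‖∫ p in diskSet, Complex.exp (Complex.I * ((c * p.1 + d * p.2 : ℝ) : ℂ))‖ ≤ 4 / |c| := by
  have hswap : Prod.swap ⁻¹' diskSet = diskSet := by
    ext ⟨x, y⟩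
    simp only [diskSet, Set.mem_preimage, Set.mem_setOf_eq, Prod.swap_prod_mk]
    constructor <;> intro <;> linarith
  have key := (MeasureTheory.Measure.measurePreserving_swap (μ := (volume : Measure ℝ)) (ν := volume)).setIntegral_preimage_emb
    MeasurableEquiv.prodComm.measurableEmbedding
    (fun p : ℝ × ℝ => Complex.exp (Complex.I * ((c * p.1 + d * p.2 : ℝ) : ℂ))) diskSet
  rw [hswap] at key
  rw [MeasureTheory.Measure.volume_eq_prod, ← key]
  have : ∀ p : ℝ × ℝ, Complex.exp (Complex.I * ((c * (Prod.swap p).1 + d * (Prod.swap p).2 : ℝ) : ℂ))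
      = Complex.exp (Complex.I * ((d * p.1 + c * p.2 : ℝ) : ℂ)) := by
    rintro ⟨x, y⟩
    exact congrArg Complex.exp (by push_cast [Prod.swap_prod_mk]; ring)
  calc ‖∫ p in diskSet, Complex.exp (Complex.I * ((c * (Prod.swap p).1 + d * (Prod.swap p).2 : ℝ) : ℂ)) ∂((volume : Measure ℝ).prod volume)‖
      = ‖∫ p in diskSet, Complex.exp (Complex.I * ((d * p.1 + c * p.2 : ℝ) : ℂ)) ∂((volume : Measure ℝ).prod volume)‖ := by
        rw [MeasureTheory.setIntegral_congr_fun diskSet_measurable (fun p _ => this p)]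
    _ ≤ 4 / |c| := by
        rw [← MeasureTheory.Measure.volume_eq_prod]
        exact bound_snd d c hc

lemma diskIntegral_eq (c d : ℝ) :
    (∫ x in Metric.closedBall (0 : EuclideanSpace ℝ (Fin 2)) 1,
      Complex.exp (Complex.I * ((c * x 0 + d * x 1 : ℝ) : ℂ)))
      = ∫ p in diskSet, Complex.exp (Complex.I * ((c * p.1 + d * p.2 : ℝ) : ℂ)) := by
  set e := (MeasurableEquiv.toLp 2 (Fin 2 → ℝ)).symm.trans (MeasurableEquiv.finTwoArrow) with he
  have hmp : MeasurePreserving (⇑e) volume volume := by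
    rw [he, MeasurableEquiv.coe_trans]
    exact (volume_preserving_finTwoArrow ℝ).comp
      (EuclideanSpace.volume_preserving_symm_measurableEquiv_toLp (Fin 2))
  have happly : ∀ x : EuclideanSpace ℝ (Fin 2), e x = (x 0, x 1) := by
    intro x
    rw [he]
    rfl
  have key := hmp.setIntegral_preimage_emb e.measurableEmbedding
    (fun p : ℝ × ℝ => Complex.exp (Complex.I * ((c * p.1 + d * p.2 : ℝ) : ℂ))) diskSet
  rw [← key]
  have hpre : ⇑e ⁻¹' diskSet = Metric.closedBall (0 : EuclideanSpace ℝ (Fin 2)) 1 := by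
    ext x
    rw [Set.mem_preimage, happly, Metric.mem_closedBall, dist_zero_right]
    simp only [diskSet, Set.mem_setOf_eq]
    rw [EuclideanSpace.norm_eq, Fin.sum_univ_two, Real.norm_eq_abs, Real.norm_eq_abs,
      sq_abs, sq_abs, show (1 : ℝ) = Real.sqrt 1 by rw [Real.sqrt_one],
      Real.sqrt_le_sqrt_iff (by positivity), Real.sqrt_one]
  rw [hpre]
  refine MeasureTheory.setIntegral_congr_fun Metric.isClosed_closedBall.measurableSet
    (fun x _ => ?_)
  rw [happly]

/-- The uniform probability measure on the closed unit disk in `ℝ²`. -/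
noncomputable def unifDisk : Measure (EuclideanSpace ℝ (Fin 2)) :=
  (ENNReal.ofReal Real.pi)⁻¹ •
    (volume.restrict (Metric.closedBall (0 : EuclideanSpace ℝ (Fin 2)) 1))

/-- The characteristic function `φ(θ) = E[exp(i θ·X)]` of a random vector `X`
uniformly distributed on the closed unit disk. -/
noncomputable def charFunDisk (θ : EuclideanSpace ℝ (Fin 2)) : ℂ :=
  ∫ x, Complex.exp (Complex.I * ((θ 0 * x 0 + θ 1 * x 1 : ℝ) : ℂ)) ∂unifDisk

theorem charFunDisk_decay_bound (θ : EuclideanSpace ℝ (Fin 2))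
    (h1 : θ 0 ≠ 0) (h2 : θ 1 ≠ 0) :
    ‖charFunDisk θ‖ ≤ (4 / Real.pi) * min (1 / |θ 0|) (1 / |θ 1|) := by
  have hπ : (0 : ℝ) < Real.pi := Real.pi_pos
  have hval : charFunDisk θ = (Real.pi)⁻¹ •
      ∫ x in Metric.closedBall (0 : EuclideanSpace ℝ (Fin 2)) 1,
        Complex.exp (Complex.I * ((θ 0 * x 0 + θ 1 * x 1 : ℝ) : ℂ)) := by
    rw [charFunDisk, unifDisk, MeasureTheory.integral_smul_measure]
    congr 1
    rw [ENNReal.toReal_inv, ENNReal.toReal_ofReal hπ.le]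
  rw [hval, norm_smul, Real.norm_eq_abs, abs_of_pos (by positivity), diskIntegral_eq]
  have hb1 : ‖∫ p in diskSet, Complex.exp (Complex.I * ((θ 0 * p.1 + θ 1 * p.2 : ℝ) : ℂ))‖
      ≤ 4 / |θ 0| := bound_fst _ _ h1
  have hb2 : ‖∫ p in diskSet, Complex.exp (Complex.I * ((θ 0 * p.1 + θ 1 * p.2 : ℝ) : ℂ))‖
      ≤ 4 / |θ 1| := bound_snd _ _ h2
  have ha1 : (0 : ℝ) < |θ 0| := abs_pos.2 h1
  have ha2 : (0 : ℝ) < |θ 1| := abs_pos.2 h2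
  rcases min_cases (1 / |θ 0|) (1 / |θ 1|) with ⟨hmin, _⟩ | ⟨hmin, _⟩ <;> rw [hmin]
  · calc Real.pi⁻¹ * ‖∫ p in diskSet, Complex.exp (Complex.I * ((θ 0 * p.1 + θ 1 * p.2 : ℝ) : ℂ))‖
        ≤ Real.pi⁻¹ * (4 / |θ 0|) := mul_le_mul_of_nonneg_left hb1 (by positivity)
      _ = 4 / Real.pi * (1 / |θ 0|) := by field_simp
  · calc Real.pi⁻¹ * ‖∫ p in diskSet, Complex.exp (Complex.I * ((θ 0 * p.1 + θ 1 * p.2 : ℝ) : ℂ))‖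
        ≤ Real.pi⁻¹ * (4 / |θ 1|) := mul_le_mul_of_nonneg_left hb2 (by positivity)
      _ = 4 / Real.pi * (1 / |θ 1|) := by field_simp
end

section
/- Let X be uniform on the unit disk in R^2 with characteristic function φ, let Q(θ) = E[(X·θ)²] = |θ|²/4, and define ψ(θ) = 1/(1-φ(θ)) - 2/Q(θ) for θ ≠ 0. Then ψ(θ) → 1/3 as θ → 0, i.e., ψ extends continuously to 0 with value 1/3. -/
open MeasureTheory Filter Real Set

lemma diskS_measurable : MeasurableSet {p : ℝ × ℝ | p.1^2 + p.2^2 ≤ 1} := by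
  apply measurableSet_le <;> fun_prop

lemma polar_moment (i j : ℕ) :
    (∫ p in {p : ℝ × ℝ | p.1^2 + p.2^2 ≤ 1}, p.1 ^ i * p.2 ^ j) =
      (∫ r in (0:ℝ)..1, r ^ (i + j + 1)) * ∫ θ in (-π)..π, cos θ ^ i * sin θ ^ j := by
  rw [← integral_indicator diskS_measurable, ← integral_comp_polarCoord_symm]
  have h1 : ∀ p ∈ polarCoord.target,
      p.1 • ({p : ℝ × ℝ | p.1^2 + p.2^2 ≤ 1}.indicator
          (fun p : ℝ × ℝ => p.1 ^ i * p.2 ^ j) (polarCoord.symm p)) =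
      (Ioc (0:ℝ) 1).indicator (fun r => r ^ (i + j + 1)) p.1 * (cos p.2 ^ i * sin p.2 ^ j) := by
    rintro ⟨r, θ⟩ hp
    simp only [polarCoord_target, mem_prod, mem_Ioi, mem_Ioo] at hp
    obtain ⟨hr, -⟩ := hp
    simp only [polarCoord_symm_apply, indicator, mem_setOf_eq, mem_Ioc]
    have hkey : (r * cos θ)^2 + (r * sin θ)^2 = r^2 := by
      have := sin_sq_add_cos_sq θ; nlinarith
    have hiff : (r * cos θ)^2 + (r * sin θ)^2 ≤ 1 ↔ r ≤ 1 := by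
      rw [hkey]
      constructor
      · intro h; nlinarith
      · intro h; nlinarith
    by_cases h : r ≤ 1
    · rw [if_pos (hiff.2 h), if_pos ⟨hr, h⟩]
      simp only [smul_eq_mul]
      ring
    · rw [if_neg (fun hc => h (hiff.1 hc)), if_neg (fun hc => h hc.2)]
      simp
  rw [setIntegral_congr_fun (polarCoord.open_target.measurableSet) h1]
  rw [polarCoord_target, Measure.volume_eq_prod, ← Measure.prod_restrict,
    integral_prod_mul (μ := volume.restrict (Ioi 0)) (ν := volume.restrict (Ioo (-π) π))
      (fun r => (Ioc (0:ℝ) 1).indicator (fun r => r ^ (i + j + 1)) r)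
      (fun θ => cos θ ^ i * sin θ ^ j)]
  congr 1
  · rw [setIntegral_indicator measurableSet_Ioc]
    have : Ioi (0:ℝ) ∩ Ioc 0 1 = Ioc 0 1 := by
      ext x
      simp only [mem_inter_iff, mem_Ioi, mem_Ioc, and_iff_right_iff_imp]
      exact fun h => h.1
    rw [this, intervalIntegral.integral_of_le (by norm_num : (0:ℝ) ≤ 1)]
  · rw [intervalIntegral.integral_of_le (by linarith [pi_pos] : -π ≤ π),
      integral_Ioc_eq_integral_Ioo]

lemma sin_pi' : sin (-π) = 0 := by simp
lemma cos_pi' : cos (-π) = -1 := by simp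

lemma M00 : (∫ p in {p : ℝ × ℝ | p.1^2 + p.2^2 ≤ 1}, p.1 ^ 0 * p.2 ^ 0) = π := by
  rw [polar_moment]; simp [integral_pow]; ring

lemma M20 : (∫ p in {p : ℝ × ℝ | p.1^2 + p.2^2 ≤ 1}, p.1 ^ 2 * p.2 ^ 0) = π/4 := by
  rw [polar_moment]; simp [integral_pow, integral_cos_sq]; ring

lemma M02 : (∫ p in {p : ℝ × ℝ | p.1^2 + p.2^2 ≤ 1}, p.1 ^ 0 * p.2 ^ 2) = π/4 := by
  rw [polar_moment]; simp [integral_pow, integral_sin_sq]; ring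

lemma M11 : (∫ p in {p : ℝ × ℝ | p.1^2 + p.2^2 ≤ 1}, p.1 ^ 1 * p.2 ^ 1) = 0 := by
  rw [polar_moment]
  have : (∫ θ in (-π)..π, cos θ ^ 1 * sin θ ^ 1) = ∫ θ in (-π)..π, sin θ * cos θ := by
    congr 1; ext θ; ring
  rw [this, integral_sin_mul_cos₁]; simp

lemma M40 : (∫ p in {p : ℝ × ℝ | p.1^2 + p.2^2 ≤ 1}, p.1 ^ 4 * p.2 ^ 0) = π/8 := by
  rw [polar_moment]
  have h : (∫ θ in (-π)..π, cos θ ^ 4) = 3*π/4 := by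
    rw [show (4:ℕ) = 2 + 2 from rfl, integral_cos_pow]
    simp [integral_cos_sq]; ring
  simp only [pow_zero, mul_one]
  rw [h, integral_pow]; norm_num; ring

lemma M04 : (∫ p in {p : ℝ × ℝ | p.1^2 + p.2^2 ≤ 1}, p.1 ^ 0 * p.2 ^ 4) = π/8 := by
  rw [polar_moment]
  have h : (∫ θ in (-π)..π, sin θ ^ 4) = 3*π/4 := by
    rw [show (4:ℕ) = 2 + 2 from rfl, integral_sin_pow]
    simp [integral_sin_sq]; ring
  simp only [pow_zero, one_mul]
  rw [h, integral_pow]; norm_num; ring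

lemma M31 : (∫ p in {p : ℝ × ℝ | p.1^2 + p.2^2 ≤ 1}, p.1 ^ 3 * p.2 ^ 1) = 0 := by
  rw [polar_moment]
  have : (∫ θ in (-π)..π, cos θ ^ 3 * sin θ ^ 1) = ∫ θ in (-π)..π, sin θ ^ (2*0+1) * cos θ ^ 3 := by
    congr 1; ext θ; ring
  rw [this, integral_sin_pow_odd_mul_cos_pow]
  simp

lemma M13 : (∫ p in {p : ℝ × ℝ | p.1^2 + p.2^2 ≤ 1}, p.1 ^ 1 * p.2 ^ 3) = 0 := by
  rw [polar_moment]
  have : (∫ θ in (-π)..π, cos θ ^ 1 * sin θ ^ 3) = ∫ θ in (-π)..π, sin θ ^ 3 * cos θ ^ (2*0+1) := by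
    congr 1; ext θ; ring
  rw [this, integral_sin_pow_mul_cos_pow_odd]
  simp

lemma M22 : (∫ p in {p : ℝ × ℝ | p.1^2 + p.2^2 ≤ 1}, p.1 ^ 2 * p.2 ^ 2) = π/24 := by
  rw [polar_moment]
  have : (∫ θ in (-π)..π, cos θ ^ 2 * sin θ ^ 2) = ∫ θ in (-π)..π, sin θ ^ 2 * cos θ ^ 2 := by
    congr 1; ext θ; ring
  rw [this, integral_sin_sq_mul_cos_sq, integral_pow]
  have h4 : sin (4*π) = 0 := by
    have := Real.sin_nat_mul_pi 4; simpa using this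
  have h4' : sin (4*(-π)) = 0 := by
    rw [show 4*(-π) = -(4*π) by ring, sin_neg, h4, neg_zero]
  rw [h4, h4']
  norm_num; ring

lemma trig_odd_i (m j : ℕ) : (∫ θ in (-π)..π, cos θ ^ (2*m+1) * sin θ ^ j) = 0 := by
  have h : (∫ θ in (-π)..π, cos θ ^ (2*m+1) * sin θ ^ j)
      = ∫ θ in (-π)..π, sin θ ^ j * cos θ ^ (2*m+1) := by congr 1; ext θ; ring
  rw [h, integral_sin_pow_mul_cos_pow_odd]
  simp

lemma trig_odd_j (i m : ℕ) : (∫ θ in (-π)..π, cos θ ^ i * sin θ ^ (2*m+1)) = 0 := by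
  have h : (∫ θ in (-π)..π, cos θ ^ i * sin θ ^ (2*m+1))
      = ∫ θ in (-π)..π, sin θ ^ (2*m+1) * cos θ ^ i := by congr 1; ext θ; ring
  rw [h, integral_sin_pow_odd_mul_cos_pow]
  simp [Real.cos_neg]

lemma Modd (i j : ℕ) (h : Odd i ∨ Odd j) :
    (∫ p in {p : ℝ × ℝ | p.1^2 + p.2^2 ≤ 1}, p.1 ^ i * p.2 ^ j) = 0 := by
  rw [polar_moment]
  rcases h with ⟨m, hm⟩ | ⟨m, hm⟩
  · rw [show i = 2*m+1 by omega, trig_odd_i, mul_zero]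
  · rw [show j = 2*m+1 by omega, trig_odd_j, mul_zero]

noncomputable def eqv : EuclideanSpace ℝ (Fin 2) ≃ᵐ ℝ × ℝ :=
  (MeasurableEquiv.toLp 2 (Fin 2 → ℝ)).symm.trans MeasurableEquiv.finTwoArrow

lemma eqv_mp : MeasurePreserving eqv volume volume :=
  (volume_preserving_finTwoArrow ℝ).comp (EuclideanSpace.volume_preserving_symm_measurableEquiv_toLp (Fin 2))

example (x : EuclideanSpace ℝ (Fin 2)) : eqv x = (x 0, x 1) := rfl

lemma euclid_norm_sq (x : EuclideanSpace ℝ (Fin 2)) : ‖x‖^2 = (x 0)^2 + (x 1)^2 := by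
  rw [EuclideanSpace.norm_eq, Real.sq_sqrt (by positivity)]
  simp [Fin.sum_univ_two, sq_abs]

lemma diskBall_preimage :
    Metric.closedBall (0 : EuclideanSpace ℝ (Fin 2)) 1 = eqv ⁻¹' {p : ℝ × ℝ | p.1^2 + p.2^2 ≤ 1} := by
  ext x
  simp only [Metric.mem_closedBall, dist_zero_right, Set.mem_preimage, Set.mem_setOf_eq]
  show ‖x‖ ≤ 1 ↔ (x 0)^2 + (x 1)^2 ≤ 1
  rw [← euclid_norm_sq]
  constructor
  · intro h; nlinarith [norm_nonneg x]
  · intro h; nlinarith [norm_nonneg x]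

lemma ball_integral {E : Type*} [NormedAddCommGroup E] [NormedSpace ℝ E] (g : ℝ × ℝ → E) :
    (∫ x in Metric.closedBall (0 : EuclideanSpace ℝ (Fin 2)) 1, g (x 0, x 1)) =
      ∫ p in {p : ℝ × ℝ | p.1^2 + p.2^2 ≤ 1}, g p := by
  rw [diskBall_preimage]
  exact eqv_mp.setIntegral_preimage_emb eqv.measurableEmbedding g _

lemma ball_moment (i j : ℕ) :
    (∫ x in Metric.closedBall (0 : EuclideanSpace ℝ (Fin 2)) 1, (x 0)^i * (x 1)^j) =
      ∫ p in {p : ℝ × ℝ | p.1^2 + p.2^2 ≤ 1}, p.1 ^ i * p.2 ^ j :=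
  ball_integral (fun p => p.1 ^ i * p.2 ^ j)

lemma cont_apply (i : Fin 2) : Continuous (fun x : EuclideanSpace ℝ (Fin 2) => x i) := by
  exact (continuous_apply i).comp (PiLp.continuous_ofLp (p := 2) (β := fun _ : Fin 2 => ℝ))

lemma int_mono (i j : ℕ) :
    IntegrableOn (fun x : EuclideanSpace ℝ (Fin 2) => (x 0)^i * (x 1)^j)
      (Metric.closedBall 0 1) volume :=
  (((cont_apply 0).pow i).mul ((cont_apply 1).pow j)).continuousOn.integrableOn_compact
    (isCompact_closedBall _ _)

lemma intadd {f g : EuclideanSpace ℝ (Fin 2) → ℝ}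
    (hf : IntegrableOn f (Metric.closedBall 0 1) volume)
    (hg : IntegrableOn g (Metric.closedBall 0 1) volume) :
    IntegrableOn (fun x => f x + g x) (Metric.closedBall 0 1) volume := hf.add hg

lemma intc (c : ℝ) (i j : ℕ) :
    IntegrableOn (fun x : EuclideanSpace ℝ (Fin 2) => c * ((x 0)^i * (x 1)^j))
      (Metric.closedBall 0 1) volume :=
  (int_mono i j).const_mul c

lemma ball_mono_val (c : ℝ) (i j : ℕ) :
    (∫ x in Metric.closedBall (0 : EuclideanSpace ℝ (Fin 2)) 1, c * ((x 0)^i * (x 1)^j))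
      = c * ∫ p in {p : ℝ × ℝ | p.1^2 + p.2^2 ≤ 1}, p.1 ^ i * p.2 ^ j := by
  rw [integral_const_mul, ball_moment]

lemma m2 (a b : ℝ) :
    (∫ x in Metric.closedBall (0 : EuclideanSpace ℝ (Fin 2)) 1, (a * x 0 + b * x 1)^2)
      = (a^2 + b^2) * (π/4) := by
  have hrw : (fun x : EuclideanSpace ℝ (Fin 2) => (a * x 0 + b * x 1)^2)
      = fun x => a^2 * ((x 0)^2 * (x 1)^0)
          + ((2*a*b) * ((x 0)^1 * (x 1)^1) + b^2 * ((x 0)^0 * (x 1)^2)) := by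
    ext x; ring
  rw [hrw, integral_add (intc _ 2 0) (intadd (intc _ 1 1) (intc _ 0 2)),
    integral_add (intc _ 1 1) (intc _ 0 2),
    ball_mono_val, ball_mono_val, ball_mono_val, M20, M11, M02]
  ring

lemma m4 (a b : ℝ) :
    (∫ x in Metric.closedBall (0 : EuclideanSpace ℝ (Fin 2)) 1, (a * x 0 + b * x 1)^4)
      = (a^2 + b^2)^2 * (π/8) := by
  have hrw : (fun x : EuclideanSpace ℝ (Fin 2) => (a * x 0 + b * x 1)^4)
      = fun x => a^4 * ((x 0)^4 * (x 1)^0)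
          + ((4*a^3*b) * ((x 0)^3 * (x 1)^1)
          + ((6*a^2*b^2) * ((x 0)^2 * (x 1)^2)
          + ((4*a*b^3) * ((x 0)^1 * (x 1)^3) + b^4 * ((x 0)^0 * (x 1)^4)))) := by
    ext x; ring
  rw [hrw,
    integral_add (intc _ 4 0) (intadd (intc _ 3 1) (intadd (intc _ 2 2) (intadd (intc _ 1 3) (intc _ 0 4)))),
    integral_add (intc _ 3 1) (intadd (intc _ 2 2) (intadd (intc _ 1 3) (intc _ 0 4))),
    integral_add (intc _ 2 2) (intadd (intc _ 1 3) (intc _ 0 4)),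
    integral_add (intc _ 1 3) (intc _ 0 4),
    ball_mono_val, ball_mono_val, ball_mono_val, ball_mono_val, ball_mono_val,
    M40, M31, M22, M13, M04]
  ring

lemma modd1 (a b : ℝ) :
    (∫ x in Metric.closedBall (0 : EuclideanSpace ℝ (Fin 2)) 1, (a * x 0 + b * x 1)^1) = 0 := by
  have hrw : (fun x : EuclideanSpace ℝ (Fin 2) => (a * x 0 + b * x 1)^1)
      = fun x => a * ((x 0)^1 * (x 1)^0) + b * ((x 0)^0 * (x 1)^1) := by
    ext x; ring
  rw [hrw, integral_add (intc _ 1 0) (intc _ 0 1), ball_mono_val, ball_mono_val,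
    Modd 1 0 (Or.inl (by decide)), Modd 0 1 (Or.inr (by decide))]
  ring

lemma modd3 (a b : ℝ) :
    (∫ x in Metric.closedBall (0 : EuclideanSpace ℝ (Fin 2)) 1, (a * x 0 + b * x 1)^3) = 0 := by
  have hrw : (fun x : EuclideanSpace ℝ (Fin 2) => (a * x 0 + b * x 1)^3)
      = fun x => a^3 * ((x 0)^3 * (x 1)^0)
          + ((3*a^2*b) * ((x 0)^2 * (x 1)^1)
          + ((3*a*b^2) * ((x 0)^1 * (x 1)^2) + b^3 * ((x 0)^0 * (x 1)^3))) := by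
    ext x; ring
  rw [hrw,
    integral_add (intc _ 3 0) (intadd (intc _ 2 1) (intadd (intc _ 1 2) (intc _ 0 3))),
    integral_add (intc _ 2 1) (intadd (intc _ 1 2) (intc _ 0 3)),
    integral_add (intc _ 1 2) (intc _ 0 3),
    ball_mono_val, ball_mono_val, ball_mono_val, ball_mono_val,
    Modd 3 0 (Or.inl (by decide)), Modd 2 1 (Or.inr (by decide)),
    Modd 1 2 (Or.inl (by decide)), Modd 0 3 (Or.inr (by decide))]
  ring

lemma modd5 (a b : ℝ) :
    (∫ x in Metric.closedBall (0 : EuclideanSpace ℝ (Fin 2)) 1, (a * x 0 + b * x 1)^5) = 0 := by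
  have hrw : (fun x : EuclideanSpace ℝ (Fin 2) => (a * x 0 + b * x 1)^5)
      = fun x => a^5 * ((x 0)^5 * (x 1)^0)
          + ((5*a^4*b) * ((x 0)^4 * (x 1)^1)
          + ((10*a^3*b^2) * ((x 0)^3 * (x 1)^2)
          + ((10*a^2*b^3) * ((x 0)^2 * (x 1)^3)
          + ((5*a*b^4) * ((x 0)^1 * (x 1)^4) + b^5 * ((x 0)^0 * (x 1)^5))))) := by
    ext x; ring
  rw [hrw,
    integral_add (intc _ 5 0) (intadd (intc _ 4 1) (intadd (intc _ 3 2) (intadd (intc _ 2 3)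
      (intadd (intc _ 1 4) (intc _ 0 5))))),
    integral_add (intc _ 4 1) (intadd (intc _ 3 2) (intadd (intc _ 2 3) (intadd (intc _ 1 4) (intc _ 0 5)))),
    integral_add (intc _ 3 2) (intadd (intc _ 2 3) (intadd (intc _ 1 4) (intc _ 0 5))),
    integral_add (intc _ 2 3) (intadd (intc _ 1 4) (intc _ 0 5)),
    integral_add (intc _ 1 4) (intc _ 0 5),
    ball_mono_val, ball_mono_val, ball_mono_val, ball_mono_val, ball_mono_val, ball_mono_val,
    Modd 5 0 (Or.inl (by decide)), Modd 4 1 (Or.inr (by decide)),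
    Modd 3 2 (Or.inl (by decide)), Modd 2 3 (Or.inr (by decide)),
    Modd 1 4 (Or.inl (by decide)), Modd 0 5 (Or.inr (by decide))]
  ring

lemma vol_ball : volume (Metric.closedBall (0 : EuclideanSpace ℝ (Fin 2)) 1)
    = ENNReal.ofReal π := by
  rw [EuclideanSpace.volume_closedBall]
  simp only [Fintype.card_fin]
  rw [show ((2:ℕ):ℝ)/2+1 = (2:ℝ) by norm_num, Real.Gamma_two,
    show Real.sqrt π ^ 2 = π from Real.sq_sqrt Real.pi_pos.le]
  rw [div_one]
  simp

lemma unif_integral (f : EuclideanSpace ℝ (Fin 2) → ℂ) :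
    (∫ x, f x ∂unifDisk) = (π⁻¹ : ℝ) •
      ∫ x in Metric.closedBall (0 : EuclideanSpace ℝ (Fin 2)) 1, f x := by
  rw [unifDisk, integral_smul_measure, ENNReal.toReal_inv, ENNReal.toReal_ofReal Real.pi_pos.le]

lemma abs_s_le (θ x : EuclideanSpace ℝ (Fin 2)) (hx : ‖x‖ ≤ 1) :
    |θ 0 * x 0 + θ 1 * x 1| ≤ ‖θ‖ := by
  have h1 := euclid_norm_sq θ
  have h2 := euclid_norm_sq x
  have hsq : (θ 0 * x 0 + θ 1 * x 1)^2 ≤ ‖θ‖^2 := by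
    nlinarith [sq_nonneg (θ 0 * x 1 - θ 1 * x 0),
      mul_nonneg (by positivity : (0:ℝ) ≤ θ 0^2 + θ 1^2)
        (by nlinarith [norm_nonneg x] : (0:ℝ) ≤ 1 - ‖x‖^2)]
  rw [abs_le]
  constructor <;> nlinarith [norm_nonneg θ]

lemma intaddC {f g : EuclideanSpace ℝ (Fin 2) → ℂ}
    (hf : IntegrableOn f (Metric.closedBall 0 1) volume)
    (hg : IntegrableOn g (Metric.closedBall 0 1) volume) :
    IntegrableOn (fun x => f x + g x) (Metric.closedBall 0 1) volume := hf.add hg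

lemma Psum (z : ℂ) : (∑ m ∈ Finset.range 6, (Complex.I * z)^m / m.factorial)
    = 1 + Complex.I*z - z^2/2 - Complex.I*z^3/6 + z^4/24 + Complex.I*z^5/120 := by
  simp only [Finset.sum_range_succ, Finset.sum_range_zero, Nat.factorial]
  push_cast
  linear_combination (z^2/2 + Complex.I*z^3/6 + z^4/24*(Complex.I^2-1)
    + Complex.I*z^5/120*(Complex.I^2-1)) * Complex.I_sq

lemma key (θ : EuclideanSpace ℝ (Fin 2)) (hθ : ‖θ‖ ≤ 1) :
    ‖(1 - charFunDisk θ) - ((‖θ‖^2/8 - ‖θ‖^4/192 : ℝ) : ℂ)‖ ≤ ‖θ‖^6 := by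
  set B := Metric.closedBall (0 : EuclideanSpace ℝ (Fin 2)) 1 with hB
  set s : EuclideanSpace ℝ (Fin 2) → ℝ := fun x => θ 0 * x 0 + θ 1 * x 1 with hs
  have hcs : Continuous fun x : EuclideanSpace ℝ (Fin 2) => ((s x : ℝ) : ℂ) :=
    Complex.continuous_ofReal.comp
      ((continuous_const.mul (cont_apply 0)).add (continuous_const.mul (cont_apply 1)))
  have hce : Continuous fun x : EuclideanSpace ℝ (Fin 2) =>
      Complex.exp (Complex.I * (s x : ℂ)) :=
    Complex.continuous_exp.comp (continuous_const.mul hcs)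
  have hcomp : IsCompact B := isCompact_closedBall _ _
  have hIe : IntegrableOn (fun x => Complex.exp (Complex.I * (s x : ℂ))) B volume :=
    hce.continuousOn.integrableOn_compact hcomp
  have hIu : ∀ (c : ℂ) (k : ℕ),
      IntegrableOn (fun x => c * ((s x : ℂ))^k) B volume :=
    fun c k => (continuous_const.mul (hcs.pow k)).continuousOn.integrableOn_compact hcomp
  -- the polynomial part
  set P1 : EuclideanSpace ℝ (Fin 2) → ℂ := fun x =>
    (-Complex.I) * ((s x : ℂ))^1 + ((1/2 : ℂ) * ((s x : ℂ))^2 + ((Complex.I/6) * ((s x : ℂ))^3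
      + ((-1/24 : ℂ) * ((s x : ℂ))^4 + (-Complex.I/120) * ((s x : ℂ))^5))) with hP1def
  set g2 : EuclideanSpace ℝ (Fin 2) → ℂ := fun x =>
    (∑ m ∈ Finset.range 6, (Complex.I * (s x : ℂ))^m / m.factorial)
      - Complex.exp (Complex.I * (s x : ℂ)) with hg2def
  have hIP1 : IntegrableOn P1 B volume :=
    (hIu _ 1).add ((hIu _ 2).add ((hIu _ 3).add ((hIu _ 4).add (hIu _ 5))))
  have hg2c : Continuous g2 := by
    apply Continuous.sub _ hce
    exact continuous_finset_sum _ fun m _ =>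
      ((continuous_const.mul hcs).pow m).div_const _
  have hIg2 : IntegrableOn g2 B volume := hg2c.continuousOn.integrableOn_compact hcomp
  -- integral of u^k as real
  have hu : ∀ k : ℕ, (∫ x in B, ((s x : ℂ))^k) = (((∫ x in B, (s x)^k) : ℝ) : ℂ) := by
    intro k
    have h := integral_ofReal (𝕜 := ℂ) (f := fun x => (s x)^k) (μ := volume.restrict B)
    push_cast at h ⊢
    exact h
  have hnsq := euclid_norm_sq θ
  have hu1 : (∫ x in B, (s x)^1) = 0 := modd1 _ _
  have hu2 : (∫ x in B, (s x)^2) = ‖θ‖^2 * (π/4) := by rw [hs]; simp only []; rw [m2, hnsq]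
  have hu3 : (∫ x in B, (s x)^3) = 0 := modd3 _ _
  have hu4 : (∫ x in B, (s x)^4) = ‖θ‖^4 * (π/8) := by
    rw [hs]; simp only []; rw [m4, ← hnsq]; ring
  have hu5 : (∫ x in B, (s x)^5) = 0 := modd5 _ _
  have hP1 : (∫ x in B, P1 x) = ((π * ‖θ‖^2/8 - π * ‖θ‖^4/192 : ℝ) : ℂ) := by
    rw [hP1def]
    rw [integral_add (hIu _ 1) (intaddC (hIu _ 2) (intaddC (hIu _ 3) (intaddC (hIu _ 4) (hIu _ 5)))),
      integral_add (hIu _ 2) (intaddC (hIu _ 3) (intaddC (hIu _ 4) (hIu _ 5))),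
      integral_add (hIu _ 3) (intaddC (hIu _ 4) (hIu _ 5)),
      integral_add (hIu _ 4) (hIu _ 5),
      integral_const_mul, integral_const_mul, integral_const_mul, integral_const_mul,
      integral_const_mul, hu, hu, hu, hu, hu, hu1, hu2, hu3, hu4, hu5]
    push_cast
    ring
  -- decomposition of 1 - charFunDisk θ
  have hone : (1 : ℂ) = (π⁻¹ : ℝ) • ∫ x in B, (1 : ℂ) := by
    rw [setIntegral_const, hB, measureReal_def, vol_ball, ENNReal.toReal_ofReal Real.pi_pos.le]
    rw [smul_smul]
    rw [inv_mul_cancel₀ Real.pi_ne_zero]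
    simp
  have hchar : charFunDisk θ = (π⁻¹ : ℝ) • ∫ x in B, Complex.exp (Complex.I * (s x : ℂ)) :=
    unif_integral _
  have hIone : IntegrableOn (fun _ : EuclideanSpace ℝ (Fin 2) => (1:ℂ)) B volume := by
    refine integrableOn_const (lt_top_iff_ne_top.1 ?_)
    rw [hB, vol_ball]
    exact ENNReal.ofReal_lt_top
  have hdecomp : 1 - charFunDisk θ = (π⁻¹ : ℝ) • ∫ x in B, (P1 x + g2 x) := by
    rw [hchar, hone, ← smul_sub, ← integral_sub hIone hIe]
    congr 1
    apply integral_congr_ae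
    filter_upwards with x
    rw [hP1def, hg2def]
    simp only []
    rw [Psum]
    ring
  have hsplit : (∫ x in B, (P1 x + g2 x)) = (∫ x in B, P1 x) + ∫ x in B, g2 x :=
    integral_add hIP1 hIg2
  -- the remainder bound
  have hg2bound : ∀ x ∈ B, ‖g2 x‖ ≤ ‖θ‖^6 := by
    intro x hx
    have hxnorm : ‖x‖ ≤ 1 := by
      rw [hB] at hx
      simpa [dist_zero_right] using hx
    have hsle : |s x| ≤ ‖θ‖ := abs_s_le θ x hxnorm
    have habs : ‖Complex.I * (s x : ℂ)‖ = |s x| := by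
      rw [norm_mul, Complex.norm_I, one_mul, Complex.norm_real, Real.norm_eq_abs]
    have h1 : ‖Complex.I * (s x : ℂ)‖ ≤ 1 := by
      rw [habs]; exact hsle.trans hθ
    have := Complex.exp_bound h1 (n := 6) (by norm_num)
    rw [hg2def]
    simp only []
    rw [norm_sub_rev]
    refine this.trans ?_
    rw [habs]
    have h6 : |s x|^6 ≤ ‖θ‖^6 := by
      apply pow_le_pow_left₀ (abs_nonneg _) hsle
    have hpos : (0:ℝ) ≤ |s x|^6 := by positivity
    calc |s x| ^ 6 * ((Nat.succ 6 : ℝ) * ((Nat.factorial 6 : ℝ) * 6)⁻¹)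
        ≤ |s x|^6 * 1 := by
          apply mul_le_mul_of_nonneg_left _ hpos
          norm_num [Nat.factorial]
      _ ≤ ‖θ‖^6 := by rw [mul_one]; exact h6
  have hg2int : ‖∫ x in B, g2 x‖ ≤ ‖θ‖^6 * π := by
    have := norm_setIntegral_le_of_norm_le_const (μ := volume) (s := B) (f := g2)
      (C := ‖θ‖^6) (by rw [hB, vol_ball]; exact ENNReal.ofReal_lt_top) hg2bound
    rw [hB, measureReal_def, vol_ball, ENNReal.toReal_ofReal Real.pi_pos.le] at this
    exact this
  -- conclude
  have hfinal : (1 - charFunDisk θ) - ((‖θ‖^2/8 - ‖θ‖^4/192 : ℝ) : ℂ)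
      = (π⁻¹ : ℝ) • ∫ x in B, g2 x := by
    rw [hdecomp, hsplit, smul_add, hP1]
    have : (π⁻¹ : ℝ) • ((π * ‖θ‖^2/8 - π * ‖θ‖^4/192 : ℝ) : ℂ)
        = ((‖θ‖^2/8 - ‖θ‖^4/192 : ℝ) : ℂ) := by
      rw [Complex.real_smul]
      push_cast
      have hπ : (π : ℂ) ≠ 0 := by
        exact_mod_cast Complex.ofReal_ne_zero.2 Real.pi_ne_zero
      field_simp
    rw [this]
    ring
  rw [hfinal, norm_smul, Real.norm_eq_abs, abs_of_pos (by positivity : (0:ℝ) < π⁻¹)]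
  calc π⁻¹ * ‖∫ x in B, g2 x‖ ≤ π⁻¹ * (‖θ‖^6 * π) := by
        apply mul_le_mul_of_nonneg_left hg2int (by positivity)
    _ = ‖θ‖^6 := by field_simp

noncomputable def Efun (θ : EuclideanSpace ℝ (Fin 2)) : ℂ :=
  (1 - charFunDisk θ) - ((‖θ‖^2/8 - ‖θ‖^4/192 : ℝ) : ℂ)

noncomputable def Nfun (θ : EuclideanSpace ℝ (Fin 2)) : ℂ :=
  1/24 - 8 * Efun θ / (‖θ‖ : ℂ)^4

noncomputable def Dfun (θ : EuclideanSpace ℝ (Fin 2)) : ℂ :=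
  1/8 - (‖θ‖ : ℂ)^2/192 + Efun θ / (‖θ‖ : ℂ)^2

/-- `ψ(θ) = 1/(1-φ(θ)) - 2/Q(θ)` where `Q(θ) = E[(X·θ)²] = ‖θ‖²/4`,
so `2/Q(θ) = 8/‖θ‖²`.  As `θ → 0` (with `θ ≠ 0`), `ψ(θ) → 1/3`. -/
theorem charFunDisk_psi_tendsto :
    Tendsto (fun θ : EuclideanSpace ℝ (Fin 2) =>
        (1 - charFunDisk θ)⁻¹ - ((2 / (‖θ‖ ^ 2 / 4) : ℝ) : ℂ))
      (nhdsWithin 0 {0}ᶜ) (nhds ((1 : ℂ) / 3)) := by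
  set l := nhdsWithin (0 : EuclideanSpace ℝ (Fin 2)) {0}ᶜ with hl
  -- basic eventual facts
  have hmem : ∀ᶠ θ in l, θ ≠ 0 := by
    filter_upwards [self_mem_nhdsWithin] with θ hθ
    exact hθ
  have hsmall : ∀ᶠ θ in l, ‖θ‖ ≤ 1 := by
    apply eventually_nhdsWithin_of_eventually_nhds
    filter_upwards [Metric.closedBall_mem_nhds (0 : EuclideanSpace ℝ (Fin 2)) one_pos] with θ hθ
    simpa [dist_zero_right] using hθ
  have htn : Tendsto (fun θ : EuclideanSpace ℝ (Fin 2) => ‖θ‖) l (nhds 0) :=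
    (continuous_norm.tendsto' 0 0 norm_zero).mono_left nhdsWithin_le_nhds
  have htnC : Tendsto (fun θ : EuclideanSpace ℝ (Fin 2) => (‖θ‖ : ℂ)) l (nhds 0) := by
    have := (Complex.continuous_ofReal.tendsto 0).comp htn
    simpa [Function.comp_def] using this
  -- E/T^4 → 0
  have hE4 : Tendsto (fun θ => Efun θ / (‖θ‖ : ℂ)^4) l (nhds 0) := by
    apply squeeze_zero_norm' (a := fun θ : EuclideanSpace ℝ (Fin 2) => ‖θ‖^2)
    · filter_upwards [hmem, hsmall] with θ h0 h1
      have ht : (0:ℝ) < ‖θ‖ := norm_pos_iff.2 h0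
      have hEb := key θ h1
      rw [norm_div]
      have hden : ‖((‖θ‖ : ℂ))^4‖ = ‖θ‖^4 := by
        rw [norm_pow, Complex.norm_real, Real.norm_eq_abs, abs_of_pos ht]
      rw [hden, div_le_iff₀ (by positivity)]
      calc ‖Efun θ‖ ≤ ‖θ‖^6 := hEb
        _ = ‖θ‖^2 * ‖θ‖^4 := by ring
    · simpa using (htn.pow 2)
  -- E/T^2 → 0
  have hE2 : Tendsto (fun θ => Efun θ / (‖θ‖ : ℂ)^2) l (nhds 0) := by
    apply squeeze_zero_norm' (a := fun θ : EuclideanSpace ℝ (Fin 2) => ‖θ‖^4)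
    · filter_upwards [hmem, hsmall] with θ h0 h1
      have ht : (0:ℝ) < ‖θ‖ := norm_pos_iff.2 h0
      have hEb := key θ h1
      rw [norm_div]
      have hden : ‖((‖θ‖ : ℂ))^2‖ = ‖θ‖^2 := by
        rw [norm_pow, Complex.norm_real, Real.norm_eq_abs, abs_of_pos ht]
      rw [hden, div_le_iff₀ (by positivity)]
      calc ‖Efun θ‖ ≤ ‖θ‖^6 := hEb
        _ = ‖θ‖^4 * ‖θ‖^2 := by ring
    · simpa using (htn.pow 4)
  -- N → 1/24, D → 1/8
  have hN : Tendsto Nfun l (nhds (1/24)) := by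
    have : Tendsto (fun θ => (1/24 : ℂ) - 8 * (Efun θ / (‖θ‖ : ℂ)^4)) l
        (nhds (1/24 - 8 * 0)) := tendsto_const_nhds.sub ((hE4.const_mul 8))
    simp only [mul_zero, sub_zero] at this
    apply this.congr
    intro θ
    rw [Nfun]
    ring
  have hD : Tendsto Dfun l (nhds (1/8)) := by
    have h2 : Tendsto (fun θ : EuclideanSpace ℝ (Fin 2) => ((‖θ‖:ℂ))^2/192) l (nhds 0) := by
      have := (htnC.pow 2).div_const (192 : ℂ)
      simpa using this
    have : Tendsto (fun θ => (1/8 : ℂ) - ((‖θ‖:ℂ))^2/192 + Efun θ / (‖θ‖ : ℂ)^2) l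
        (nhds (1/8 - 0 + 0)) := (tendsto_const_nhds.sub h2).add hE2
    simp only [sub_zero, add_zero] at this
    exact this
  have hdiv : Tendsto (fun θ => Nfun θ / Dfun θ) l (nhds ((1:ℂ)/3)) := by
    have h := hN.div hD (by norm_num)
    have he : ((1:ℂ)/24) / ((1:ℂ)/8) = 1/3 := by norm_num
    rwa [he] at h
  -- eventual equality
  have hDne : ∀ᶠ θ in l, Dfun θ ≠ 0 := hD.eventually_ne (by norm_num)
  apply hdiv.congr'
  filter_upwards [hmem, hDne] with θ h0 hDθ
  have ht : (0:ℝ) < ‖θ‖ := norm_pos_iff.2 h0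
  have hT : ((‖θ‖ : ℝ) : ℂ) ≠ 0 := Complex.ofReal_ne_zero.2 (ne_of_gt ht)
  have hT2 : ((‖θ‖ : ℝ) : ℂ)^2 ≠ 0 := pow_ne_zero 2 hT
  have hu : 1 - charFunDisk θ = Dfun θ * ((‖θ‖ : ℝ) : ℂ)^2 := by
    rw [Dfun, Efun]
    push_cast
    field_simp
    ring
  have hu0 : 1 - charFunDisk θ ≠ 0 := by
    rw [hu]; exact mul_ne_zero hDθ hT2
  have hNT : Nfun θ = (1 - 8 * Dfun θ) / ((‖θ‖ : ℝ) : ℂ)^2 := by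
    rw [Nfun, Dfun, Efun]
    field_simp
    ring
  have hc : ((2 / (‖θ‖ ^ 2 / 4) : ℝ) : ℂ) = 8 / ((‖θ‖ : ℝ) : ℂ)^2 := by
    push_cast
    rw [div_div_eq_mul_div]
    ring
  rw [eq_comm, eq_div_iff hDθ, hc, hu, hNT]
  field_simp
end
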